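/- Let G, H, K be groups, C an abelian group, V ≤ G × H and U ≤ H × K subgroups, and ν : V → C, μ : U → C homomorphisms. Let V_ν = {(g, h, ν(g,h)⁻¹) : (g,h) ∈ V} ≤ G × H × C and U_μ = {(h, k, μ(h,k)⁻¹) : (h,k) ∈ U} ≤ H × K × C, let X = (G × H × C)/V_ν and Y = (H × K × C)/U_μ with left translation actions, let W be the set of orbits of X × Y under the H × C action (h',c)·(x,y) = ((1,h',c)·x, (h',1,c⁻¹)·y), and let C act on W by c·[x,y] = [(1,1,c)·x, y]. Fix h ∈ H and let w_h ∈ W be the class of (V_ν, (h,1,1)·U_μ). Then the stabilizer of w_h under the C-action equals {ν(1,h')·μ(h⁻¹h'h, 1) : h' ∈ H, (1,h') ∈ V, (h⁻¹h'h, 1) ∈ U}. In particular, C acts freely on the orbit of w_h if and only if ν(1,h')·μ(h⁻¹h'h,1) = 1 for all such h'. -/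

import Mathlib

/-- The homomorphism `V → A × B × C`, `v ↦ (v₁, v₂, ν(v)⁻¹)` attached to a
subgroup `V ≤ A × B` and a character `ν : V → C`. -/
def twistHom {A B C : Type*} [Group A] [Group B] [CommGroup C]
    (V : Subgroup (A × B)) (ν : V →* C) : V →* A × B × C where
  toFun v := ((v : A × B).1, (v : A × B).2, (ν v)⁻¹)
  map_one' := by simp
  map_mul' x y := by
    simp [Prod.ext_iff, mul_comm]

/-- The subgroup `V_ν = {(a, b, ν(a,b)⁻¹) | (a,b) ∈ V} ≤ A × B × C`. -/
def twistSub {A B C : Type*} [Group A] [Group B] [CommGroup C]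
    (V : Subgroup (A × B)) (ν : V →* C) : Subgroup (A × B × C) :=
  (twistHom V ν).range

/-- The `H × C`-orbit relation on `X × Y`, where `X = (G×H×C)/V_ν` and
`Y = (H×K×C)/U_μ`, via `(h,c)·(x,y) = ((1,h,c)x, (h,1,c⁻¹)y)`. -/
def orbRel {G H K C : Type*} [Group G] [Group H] [Group K] [CommGroup C]
    (V : Subgroup (G × H)) (U : Subgroup (H × K)) (ν : V →* C) (μ : U →* C) :
    (((G × H × C) ⧸ twistSub V ν) × ((H × K × C) ⧸ twistSub U μ)) →
    (((G × H × C) ⧸ twistSub V ν) × ((H × K × C) ⧸ twistSub U μ)) → Prop :=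
  fun p q => ∃ (h : H) (c : C),
    q = ((((1 : G), h, c) : G × H × C) • p.1, (((h, (1 : K), c⁻¹)) : H × K × C) • p.2)

lemma mem_twistSub {A B C : Type*} [Group A] [Group B] [CommGroup C]
    (V : Subgroup (A × B)) (ν : V →* C) {a : A} {b : B} {c : C} :
    (a, b, c) ∈ twistSub V ν ↔ ∃ hv : (a, b) ∈ V, c = (ν ⟨(a, b), hv⟩)⁻¹ := by
  constructor
  · rintro ⟨v, hv⟩
    simp only [twistHom, MonoidHom.coe_mk, OneHom.coe_mk, Prod.mk.injEq] at hv
    obtain ⟨h1, h2, h3⟩ := hv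
    have hmem : (a, b) ∈ V := by
      have : (v : A × B) = (a, b) := Prod.ext h1 h2
      rw [← this]; exact v.2
    refine ⟨hmem, ?_⟩
    have : v = ⟨(a, b), hmem⟩ := Subtype.ext (Prod.ext h1 h2)
    rw [← h3, this]
  · rintro ⟨hv, rfl⟩
    exact ⟨⟨(a, b), hv⟩, rfl⟩

lemma orbRel_equiv {G H K C : Type*} [Group G] [Group H] [Group K] [CommGroup C]
    (V : Subgroup (G × H)) (U : Subgroup (H × K)) (ν : V →* C) (μ : U →* C) :
    Equivalence (orbRel V U ν μ) := by
  constructor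
  · intro p
    exact ⟨1, 1, by simp [Prod.ext_iff, show ((1:G),(1:H),(1:C)) = (1 : G × H × C) from rfl,
      show ((1:H),(1:K),(1:C)⁻¹) = (1 : H × K × C) from by simp [Prod.ext_iff],
      show ((1:H),(1:K),(1:C)) = (1 : H × K × C) from rfl]⟩
  · rintro p q ⟨h, c, rfl⟩
    refine ⟨h⁻¹, c⁻¹, ?_⟩
    simp [Prod.ext_iff, smul_smul, Prod.mul_def, show ((1:G),(1:H),(1:C)) = (1 : G × H × C) from rfl,
      show ((1:H),(1:K),(1:C)) = (1 : H × K × C) from rfl]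
  · rintro p q r ⟨h, c, rfl⟩ ⟨h', c', rfl⟩
    refine ⟨h' * h, c' * c, ?_⟩
    simp [Prod.ext_iff, smul_smul, Prod.mul_def, mul_inv, mul_comm]

/-- For `w_h = [(V_ν, (h,1,1)U_μ)]` in the set `W` of `H × C`-orbits of
`X × Y`, the stabilizer of `w_h` under the `C`-action `c·[x,y] = [(1,1,c)x, y]`
is `{ν(1,h')·μ(h⁻¹h'h,1) | (1,h') ∈ V, (h⁻¹h'h,1) ∈ U}`; in particular `C`
acts freely at `w_h` iff all these products are trivial. -/
theorem stabilizer_of_orbit_eq_character_products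
    {G H K C : Type*} [Group G] [Group H] [Group K] [CommGroup C]
    (V : Subgroup (G × H)) (U : Subgroup (H × K))
    (ν : V →* C) (μ : U →* C) (h : H) :
    ({c : C |
        Quot.mk (orbRel V U ν μ)
          ((((1 : G), (1 : H), c) : G × H × C) • (QuotientGroup.mk 1),
            (QuotientGroup.mk ((h, (1 : K), (1 : C)) : H × K × C)))
        = Quot.mk (orbRel V U ν μ)
          ((QuotientGroup.mk 1),
            (QuotientGroup.mk ((h, (1 : K), (1 : C)) : H × K × C)))} =
      {c : C | ∃ (h' : H) (hv : ((1 : G), h') ∈ V) (hu : (h⁻¹ * h' * h, (1 : K)) ∈ U),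
        c = ν ⟨(1, h'), hv⟩ * μ ⟨(h⁻¹ * h' * h, 1), hu⟩}) ∧
    ((∀ c : C,
        Quot.mk (orbRel V U ν μ)
          ((((1 : G), (1 : H), c) : G × H × C) • (QuotientGroup.mk 1),
            (QuotientGroup.mk ((h, (1 : K), (1 : C)) : H × K × C)))
        = Quot.mk (orbRel V U ν μ)
          ((QuotientGroup.mk 1),
            (QuotientGroup.mk ((h, (1 : K), (1 : C)) : H × K × C))) → c = 1) ↔
      ∀ (h' : H) (hv : ((1 : G), h') ∈ V) (hu : (h⁻¹ * h' * h, (1 : K)) ∈ U),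
        ν ⟨(1, h'), hv⟩ * μ ⟨(h⁻¹ * h' * h, 1), hu⟩ = 1) := by
  have key : ∀ c : C,
      (Quot.mk (orbRel V U ν μ)
          ((((1 : G), (1 : H), c) : G × H × C) • (QuotientGroup.mk 1),
            (QuotientGroup.mk ((h, (1 : K), (1 : C)) : H × K × C)))
        = Quot.mk (orbRel V U ν μ)
          ((QuotientGroup.mk 1),
            (QuotientGroup.mk ((h, (1 : K), (1 : C)) : H × K × C))))
      ↔ (∃ (h' : H) (hv : ((1 : G), h') ∈ V) (hu : (h⁻¹ * h' * h, (1 : K)) ∈ U),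
        c = ν ⟨(1, h'), hv⟩ * μ ⟨(h⁻¹ * h' * h, 1), hu⟩) := by
    intro c
    rw [Quot.eq, (orbRel_equiv V U ν μ).eqvGen_iff]
    constructor
    · rintro ⟨h', c', heq⟩
      rw [Prod.mk.injEq] at heq
      obtain ⟨h1, h2⟩ := heq
      -- first component
      have h1' : (QuotientGroup.mk (1 : G × H × C) : (G × H × C) ⧸ twistSub V ν)
          = QuotientGroup.mk ((((1 : G), h', c') : G × H × C) * (((1 : G), (1 : H), c) * 1)) := h1
      rw [QuotientGroup.eq] at h1'
      have h1'' : (((1 : G), h', c' * c) : G × H × C) ∈ twistSub V ν := by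
        simpa [Prod.mul_def] using h1'
      obtain ⟨hv, e1⟩ := (mem_twistSub V ν).mp h1''
      -- second component
      have h2' : (QuotientGroup.mk ((h, (1 : K), (1 : C)) : H × K × C) :
            (H × K × C) ⧸ twistSub U μ)
          = QuotientGroup.mk (((h', (1 : K), c'⁻¹) : H × K × C) * (h, (1 : K), (1 : C))) := h2
      rw [QuotientGroup.eq] at h2'
      have h2'' : ((h⁻¹ * h' * h, (1 : K), c'⁻¹) : H × K × C) ∈ twistSub U μ := by
        simpa [Prod.mul_def, mul_assoc] using h2'
      obtain ⟨hu, e2⟩ := (mem_twistSub U μ).mp h2''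
      have hc' : c' = μ ⟨(h⁻¹ * h' * h, 1), hu⟩ := by
        rw [← inv_inv c', e2, inv_inv]
      have hv' : ((1 : G), h'⁻¹) ∈ V := by
        have := inv_mem hv; simpa [Prod.inv_mk] using this
      have hu' : ((h⁻¹ * h'⁻¹ * h, (1 : K))) ∈ U := by
        have := inv_mem hu; simpa [Prod.inv_mk, mul_assoc] using this
      refine ⟨h'⁻¹, hv', hu', ?_⟩
      have eν : ν ⟨((1 : G), h'⁻¹), hv'⟩ = (ν ⟨((1 : G), h'), hv⟩)⁻¹ := by
        have : ((((1 : G), h') : G × H)⁻¹) = ((1 : G), h'⁻¹) := by simp [Prod.inv_mk]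
        rw [show (⟨((1 : G), h'⁻¹), hv'⟩ : V) = (⟨((1 : G), h'), hv⟩ : V)⁻¹ from
          Subtype.ext (by simp [Prod.inv_mk]), map_inv]
      have eμ : μ ⟨(h⁻¹ * h'⁻¹ * h, (1 : K)), hu'⟩ = (μ ⟨(h⁻¹ * h' * h, (1 : K)), hu⟩)⁻¹ := by
        rw [show (⟨(h⁻¹ * h'⁻¹ * h, (1 : K)), hu'⟩ : U) = (⟨(h⁻¹ * h' * h, (1 : K)), hu⟩ : U)⁻¹
          from Subtype.ext (by simp [Prod.inv_mk, mul_assoc]), map_inv]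
      rw [eν, eμ, ← hc']
      have : c = c'⁻¹ * (ν ⟨((1 : G), h'), hv⟩)⁻¹ := by
        rw [← e1, ← mul_assoc, inv_mul_cancel, one_mul]
      rw [this, mul_comm]
    · rintro ⟨h', hv, hu, rfl⟩
      have hv' : ((1 : G), h'⁻¹) ∈ V := by
        have := inv_mem hv; simpa [Prod.inv_mk] using this
      have hu' : ((h⁻¹ * h'⁻¹ * h, (1 : K))) ∈ U := by
        have := inv_mem hu; simpa [Prod.inv_mk, mul_assoc] using this
      have eν : ν ⟨((1 : G), h'⁻¹), hv'⟩ = (ν ⟨((1 : G), h'), hv⟩)⁻¹ := by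
        rw [show (⟨((1 : G), h'⁻¹), hv'⟩ : V) = (⟨((1 : G), h'), hv⟩ : V)⁻¹ from
          Subtype.ext (by simp [Prod.inv_mk]), map_inv]
      have eμ : μ ⟨(h⁻¹ * h'⁻¹ * h, (1 : K)), hu'⟩ = (μ ⟨(h⁻¹ * h' * h, (1 : K)), hu⟩)⁻¹ := by
        rw [show (⟨(h⁻¹ * h'⁻¹ * h, (1 : K)), hu'⟩ : U) = (⟨(h⁻¹ * h' * h, (1 : K)), hu⟩ : U)⁻¹
          from Subtype.ext (by simp [Prod.inv_mk, mul_assoc]), map_inv]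
      refine ⟨h'⁻¹, (μ ⟨(h⁻¹ * h' * h, 1), hu⟩)⁻¹, ?_⟩
      rw [Prod.mk.injEq]
      constructor
      · show (QuotientGroup.mk (1 : G × H × C) : (G × H × C) ⧸ twistSub V ν)
          = QuotientGroup.mk ((((1 : G), h'⁻¹, (μ ⟨(h⁻¹ * h' * h, 1), hu⟩)⁻¹) : G × H × C)
            * (((1 : G), (1 : H), ν ⟨(1, h'), hv⟩ * μ ⟨(h⁻¹ * h' * h, 1), hu⟩) * 1))
        rw [QuotientGroup.eq]
        have : (((1 : G), h'⁻¹, ν ⟨((1 : G), h'), hv⟩) : G × H × C) ∈ twistSub V ν :=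
          (mem_twistSub V ν).mpr ⟨hv', by rw [eν, inv_inv]⟩
        simpa [Prod.mul_def, mul_assoc, mul_comm] using this
      · show (QuotientGroup.mk ((h, (1 : K), (1 : C)) : H × K × C) :
            (H × K × C) ⧸ twistSub U μ)
          = QuotientGroup.mk (((h'⁻¹, (1 : K), ((μ ⟨(h⁻¹ * h' * h, 1), hu⟩)⁻¹)⁻¹) : H × K × C)
            * (h, (1 : K), (1 : C)))
        rw [QuotientGroup.eq]
        have : ((h⁻¹ * h'⁻¹ * h, (1 : K), μ ⟨(h⁻¹ * h' * h, 1), hu⟩) : H × K × C)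
            ∈ twistSub U μ :=
          (mem_twistSub U μ).mpr ⟨hu', by rw [eμ, inv_inv]⟩
        simpa [Prod.mul_def, mul_assoc] using this
  constructor
  · ext c
    simp only [Set.mem_setOf_eq, key]
  · constructor
    · intro hfree h' hv hu
      exact hfree _ ((key _).mpr ⟨h', hv, hu, rfl⟩)
    · intro htriv c hc
      obtain ⟨h', hv, hu, rfl⟩ := (key c).mp hc
      exact htriv h' hv hu
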